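/- Let n ≥ 2, let D = {(X_1,Y_1),…,(X_n,Y_n)} be a dataset of pairs of reals with all X_i distinct and all Y_i distinct, and let D' = D ∪ {(X_{n+1},Y_{n+1})} be obtained by adding one point (with D' also tie-free). Then τ̂(D) − τ̂(D') = 2·(d_{D'} − d_D)/n − d_D / C(n,2) − 1/2, where C(n,2) = n(n−1)/2. -/

import Mathlib

/-- The number of discordant pairs of a dataset `{(X i, Y i)}`. -/
noncomputable def discord {m : ℕ} (X Y : Fin m → ℝ) : ℕ :=
  (Finset.univ.filter (fun p : Fin m × Fin m =>
    p.1 < p.2 ∧ (X p.1 - X p.2) * (Y p.1 - Y p.2) < 0)).card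

/-- The empirical Kendall rank correlation `τ̂ = m/2 - 2 d / (m - 1)`. -/
noncomputable def tauHat {m : ℕ} (X Y : Fin m → ℝ) : ℝ :=
  (m : ℝ) / 2 - 2 * (discord X Y : ℝ) / ((m : ℝ) - 1)

/-- For a tie-free dataset `D` of `n ≥ 2` points and the neighbor `D'` obtained by adding one
point, `τ̂(D) - τ̂(D') = 2 (d_{D'} - d_D)/n - d_D / C(n,2) - 1/2`. -/
theorem tauHat_add_one_difference (n : ℕ) (hn : 2 ≤ n) (X Y : Fin (n + 1) → ℝ)
    (hX : Function.Injective X) (hY : Function.Injective Y) :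
    tauHat (fun i : Fin n => X i.castSucc) (fun i : Fin n => Y i.castSucc) - tauHat X Y
      = 2 * ((discord X Y : ℝ)
            - (discord (fun i : Fin n => X i.castSucc) (fun i : Fin n => Y i.castSucc) : ℝ))
          / (n : ℝ)
        - (discord (fun i : Fin n => X i.castSucc) (fun i : Fin n => Y i.castSucc) : ℝ)
          / (n.choose 2 : ℝ)
        - 1 / 2 := by
  have hn0 : (n : ℝ) ≠ 0 := by positivity
  have hn1 : (n : ℝ) - 1 ≠ 0 := by
    have : (2 : ℝ) ≤ n := by exact_mod_cast hn
    linarith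
  have hc : (n.choose 2 : ℝ) = n * (n - 1) / 2 := by rw [Nat.choose_two_right]; rw [Nat.cast_div (Nat.even_mul_pred_self n).two_dvd (by norm_num)]; push_cast [Nat.cast_sub (by omega : 1 ≤ n)]; ring
  unfold tauHat
  rw [hc]
  push_cast
  simp only [add_sub_cancel_right]
  field_simp
  ring
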